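/- Let f(x,y) be a real homogeneous polynomial of degree n ≥ 3 with n distinct real roots. Then for every (α,β) ∈ ℝ² \ {(0,0)}, the polynomial α·f_x + β·f_y has n−1 distinct real roots. -/

import Mathlib

open MvPolynomial

/-- The real linear binary form `p.1 * x + p.2 * y`. -/
noncomputable def lin (p : ℝ × ℝ) : MvPolynomial (Fin 2) ℝ :=
  C p.1 * X 0 + C p.2 * X 1

/-- A binary form `f` has `m` distinct real roots: it factors over `ℝ` into `m`
pairwise non-proportional (nonzero) real linear forms, up to a nonzero constant. -/
noncomputable def HasDistinctRealRoots (f : MvPolynomial (Fin 2) ℝ) (m : ℕ) : Prop :=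
  ∃ (c : ℝ) (l : Fin m → ℝ × ℝ), c ≠ 0 ∧ (∀ i, l i ≠ 0) ∧
    (∀ i j, i ≠ j → (l i).1 * (l j).2 - (l j).1 * (l i).2 ≠ 0) ∧
    f = C c * ∏ i, lin (l i)


lemma eval_aeval_poly (r : ℝ) (v : Fin 2 → Polynomial ℝ) (w : MvPolynomial (Fin 2) ℝ) :
    (MvPolynomial.aeval v w).eval r = MvPolynomial.eval (fun i => (v i).eval r) w := by
  induction w using MvPolynomial.induction_on with
  | C a => simp
  | add p q hp hq => simp [hp, hq]
  | mul_X p i hp => simp [hp]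

lemma deriv_aeval2 (v : Fin 2 → Polynomial ℝ) (w : MvPolynomial (Fin 2) ℝ) :
    Polynomial.derivative (aeval v w)
      = aeval v (pderiv 0 w) * Polynomial.derivative (v 0)
        + aeval v (pderiv 1 w) * Polynomial.derivative (v 1) := by
  induction w using MvPolynomial.induction_on with
  | C a => simp
  | add p q hp hq => simp only [map_add, hp, hq]; ring
  | mul_X p i hp =>
      simp only [map_mul, pderiv_mul, map_add, Polynomial.derivative_mul, hp, aeval_X]
      fin_cases i <;>
        simp [pderiv_X_self, pderiv_X_of_ne, Fin.ext_iff] <;> ring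

lemma isHomogeneous_pderiv {w : MvPolynomial (Fin 2) ℝ} {m : ℕ} (hw : w.IsHomogeneous m)
    (i : Fin 2) : (pderiv i w).IsHomogeneous (m - 1) := by
  have h1 : pderiv i w = ∑ d ∈ w.support, pderiv i (monomial d (coeff d w)) := by
    rw [← map_sum, ← MvPolynomial.as_sum]
  rw [h1]
  apply IsHomogeneous.sum
  intro d hd
  rw [pderiv_monomial]
  by_cases hdi : d i = 0
  · simp [hdi]
    exact isHomogeneous_zero _ _ _
  · apply isHomogeneous_monomial
    have hdeg : d.degree = m := by
      have := hw (MvPolynomial.mem_support_iff.mp hd)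
      rw [Finsupp.degree_eq_weight_one]; exact this
    have hle : Finsupp.single i 1 ≤ d := by
      rw [Finsupp.single_le_iff]
      omega
    have key : ∀ e : Fin 2 →₀ ℕ, e.degree = e 0 + e 1 := by
      intro e
      rw [Finsupp.degree_eq_sum, Fin.sum_univ_two]
    have h2 := key d
    have h3 := key (d - Finsupp.single i 1)
    simp only [Finsupp.tsub_apply, Finsupp.single_apply] at h3
    rw [hdeg] at h2
    fin_cases i <;> simp_all <;> omega

lemma eval_mul_of_homog {w : MvPolynomial (Fin 2) ℝ} {m : ℕ} (hw : w.IsHomogeneous m)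
    (t : ℝ) (x : Fin 2 → ℝ) :
    eval (fun i => t * x i) w = t ^ m * eval x w := by
  rw [eval_eq', eval_eq', Finset.mul_sum]
  apply Finset.sum_congr rfl
  intro d hd
  have hdeg : ∑ i, d i = m := by
    have h0 := hw (MvPolynomial.mem_support_iff.mp hd)
    rw [← h0, ← Finsupp.degree_eq_sum]
    exact congrFun (congrArg DFunLike.coe Finsupp.degree_eq_weight_one) d
  simp only [mul_pow, Finset.prod_mul_distrib, Finset.prod_pow_eq_pow_sum, hdeg]
  ring

theorem stmt_1 (n : ℕ) (hn : 3 ≤ n) (f : MvPolynomial (Fin 2) ℝ)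
    (hhom : f.IsHomogeneous n)
    (hroots : HasDistinctRealRoots f n) :
    ∀ α β : ℝ, (α, β) ≠ (0, 0) →
      HasDistinctRealRoots (C α * pderiv 0 f + C β * pderiv 1 f) (n - 1) := by
  classical
  intro α β hab
  obtain ⟨c, l, hc, hl0, hlp, hf⟩ := hroots
  have hD : α ^ 2 + β ^ 2 ≠ 0 := by
    intro h
    apply hab
    have hα : α = 0 := by nlinarith [sq_nonneg α, sq_nonneg β]
    have hβ : β = 0 := by nlinarith [sq_nonneg α, sq_nonneg β]
    simp [hα, hβ]
  obtain ⟨γ, δ, hdet⟩ : ∃ γ δ : ℝ, α * δ - β * γ = 1 :=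
    ⟨-β / (α ^ 2 + β ^ 2), α / (α ^ 2 + β ^ 2), by field_simp; ring⟩
  set v : Fin 2 → Polynomial ℝ :=
    ![Polynomial.C α * Polynomial.X + Polynomial.C γ,
      Polynomial.C β * Polynomial.X + Polynomial.C δ] with hv
  set p : Fin n → ℝ := fun i => (l i).1 * α + (l i).2 * β with hp
  set q : Fin n → ℝ := fun i => (l i).1 * γ + (l i).2 * δ with hq
  have hlin : ∀ i, aeval v (lin (l i))
      = Polynomial.C (p i) * Polynomial.X + Polynomial.C (q i) := by
    intro i
    simp only [lin, map_add, map_mul, aeval_X, aeval_C, Polynomial.algebraMap_eq, hv,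
      Matrix.cons_val_zero, Matrix.cons_val_one, Matrix.head_cons, hp, hq,
      Polynomial.C_add, Polynomial.C_mul]
    ring
  have hpq0 : ∀ i, p i = 0 → q i ≠ 0 := by
    intro i hpi hqi
    apply hl0 i
    have h1 : (l i).1 = p i * δ - q i * β := by
      simp only [hp, hq]
      linear_combination (-(l i).1) * hdet
    have h2 : (l i).2 = q i * α - p i * γ := by
      simp only [hp, hq]
      linear_combination (-(l i).2) * hdet
    have : (l i).1 = 0 := by rw [h1, hpi, hqi]; ring
    have : (l i).2 = 0 := by rw [h2, hpi, hqi]; ring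
    exact Prod.ext ‹(l i).1 = 0› ‹(l i).2 = 0›
  have hpq : ∀ i j, i ≠ j → p i * q j - p j * q i ≠ 0 := by
    intro i j hij h
    apply hlp i j hij
    have : p i * q j - p j * q i = (l i).1 * (l j).2 - (l j).1 * (l i).2 := by
      simp only [hp, hq]
      linear_combination ((l i).1 * (l j).2 - (l j).1 * (l i).2) * hdet
    rw [← this]
    exact h
  -- the polynomial g
  set g : Polynomial ℝ := aeval v f with hg
  have hgprod : g = Polynomial.C c
      * ∏ i, (Polynomial.C (p i) * Polynomial.X + Polynomial.C (q i)) := by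
    rw [hg, hf, map_mul, map_prod]
    rw [Finset.prod_congr rfl (fun i _ => hlin i)]
    simp [Polynomial.algebraMap_eq]
  set S : Finset (Fin n) := Finset.univ.filter (fun i => p i ≠ 0) with hS
  set k := S.card with hk
  have hkn : k ≤ n := le_trans (Finset.card_filter_le _ _) (by simp)
  have hcompl : Sᶜ.card ≤ 1 := by
    rw [Finset.card_le_one]
    intro i hi j hj
    by_contra hij
    simp only [hS, Finset.mem_compl, Finset.mem_filter, Finset.mem_univ, true_and,
      not_not] at hi hj
    exact hpq i j hij (by rw [hi, hj]; ring)
  have hkn' : n - 1 ≤ k := by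
    have := Finset.card_compl_add_card S
    simp only [Fintype.card_fin] at this
    omega
  have hk2 : 2 ≤ k := by omega
  set r : Fin n → ℝ := fun i => -(q i) / p i with hr
  set c' : ℝ := c * (∏ i ∈ S, p i) * (∏ i ∈ Sᶜ, q i) with hc'
  have hc'0 : c' ≠ 0 := by
    refine mul_ne_zero (mul_ne_zero hc ?_) ?_
    · exact Finset.prod_ne_zero_iff.mpr (fun i hi => (Finset.mem_filter.mp hi).2)
    · refine Finset.prod_ne_zero_iff.mpr (fun i hi => hpq0 i ?_)
      simpa [hS] using hi
  have hgS : g = Polynomial.C c' * ∏ i ∈ S, (Polynomial.X - Polynomial.C (r i)) := by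
    have e1 : ∀ i ∈ Sᶜ,
        (Polynomial.C (p i) * Polynomial.X + Polynomial.C (q i)) = Polynomial.C (q i) := by
      intro i hi
      have hpi : p i = 0 := by simpa [hS] using hi
      simp [hpi]
    have e2 : ∀ i ∈ S, (Polynomial.C (p i) * Polynomial.X + Polynomial.C (q i))
        = Polynomial.C (p i) * (Polynomial.X - Polynomial.C (r i)) := by
      intro i hi
      have hpi : p i ≠ 0 := (Finset.mem_filter.mp hi).2
      have hqr : p i * r i = -(q i) := by
        rw [hr]
        field_simp
      rw [mul_sub, ← Polynomial.C_mul, hqr, map_neg, sub_neg_eq_add]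
    rw [hgprod, ← Finset.prod_mul_prod_compl S]
    rw [Finset.prod_congr rfl e2, Finset.prod_congr rfl e1]
    rw [Finset.prod_mul_distrib, hc']
    simp only [Polynomial.C_mul, map_prod]
    ring
  set M : Polynomial ℝ := ∏ i ∈ S, (Polynomial.X - Polynomial.C (r i)) with hM
  have hMmonic : M.Monic :=
    Polynomial.monic_prod_of_monic _ _ (fun i _ => Polynomial.monic_X_sub_C _)
  have hMdeg : M.natDegree = k := by
    rw [hM, Polynomial.natDegree_prod_of_monic _ _ (fun i _ => Polynomial.monic_X_sub_C _)]
    simp [hk]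
  have hgne : g ≠ 0 := by
    rw [hgS]
    exact mul_ne_zero (Polynomial.C_ne_zero.mpr hc'0) hMmonic.ne_zero
  have hgdeg : g.natDegree = k := by
    rw [hgS, Polynomial.natDegree_C_mul hc'0, hMdeg]
  have hgcoeff : g.coeff k = c' := by
    rw [hgS, Polynomial.coeff_C_mul, ← hMdeg, hMmonic.coeff_natDegree, mul_one]
  set g' := Polynomial.derivative g with hg'
  have hcast : ((k - 1 : ℕ) : ℝ) + 1 = (k : ℝ) := by
    push_cast [Nat.cast_sub (by omega : 1 ≤ k)]
    ring
  have hg'coeff : g'.coeff (k - 1) = c' * k := by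
    rw [hg', Polynomial.coeff_derivative, show (k - 1 + 1) = k from by omega, hgcoeff, hcast]
  have hc'k : c' * (k : ℝ) ≠ 0 := mul_ne_zero hc'0 (Nat.cast_ne_zero.mpr (by omega))
  have hg'ne : g' ≠ 0 := by
    intro h
    rw [h, Polynomial.coeff_zero] at hg'coeff
    exact hc'k hg'coeff.symm
  have hg'degle : g'.natDegree ≤ k - 1 := by
    rw [hg']
    exact (Polynomial.natDegree_derivative_le g).trans (by omega)
  have hrinj : ∀ i ∈ S, ∀ j ∈ S, r i = r j → i = j := by
    intro i hi j hj hij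
    by_contra hne
    apply hpq i j hne
    have hpi : p i ≠ 0 := (Finset.mem_filter.mp hi).2
    have hpj : p j ≠ 0 := (Finset.mem_filter.mp hj).2
    rw [hr, div_eq_div_iff hpi hpj] at hij
    linarith [hij]
  have hroot : ∀ i ∈ S, g.IsRoot (r i) := by
    intro i hi
    rw [hgS]
    simp only [Polynomial.IsRoot, Polynomial.eval_mul, Polynomial.eval_C, hM,
      Polynomial.eval_prod, Polynomial.eval_sub, Polynomial.eval_X]
    rw [Finset.prod_eq_zero hi (by simp)]
    ring
  have himg : S.image r ⊆ g.roots.toFinset := by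
    intro x hx
    obtain ⟨i, hi, rfl⟩ := Finset.mem_image.mp hx
    rw [Multiset.mem_toFinset, Polynomial.mem_roots hgne]
    exact hroot i hi
  have hcard1 : k ≤ g.roots.toFinset.card := by
    calc k = (S.image r).card := (Finset.card_image_of_injOn hrinj).symm
    _ ≤ g.roots.toFinset.card := Finset.card_le_card himg
  have hcard2 : k - 1 ≤ g'.roots.toFinset.card := by
    have := Polynomial.card_roots_toFinset_le_derivative g
    rw [← hg'] at this
    omega
  have hcard3 : Multiset.card g'.roots ≤ k - 1 := (Polynomial.card_roots' g').trans hg'degle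
  have htf : g'.roots.toFinset.card ≤ Multiset.card g'.roots := Multiset.toFinset_card_le _
  have hcardroots : Multiset.card g'.roots = k - 1 := by omega
  have hnodup : g'.roots.Nodup := by
    rw [← Multiset.dedup_eq_self]
    refine Multiset.eq_of_le_of_card_le (Multiset.dedup_le _) ?_
    have : Multiset.card g'.roots.dedup = g'.roots.toFinset.card := rfl
    omega
  have hg'deg : g'.natDegree = k - 1 :=
    le_antisymm hg'degle (hcardroots ▸ Polynomial.card_roots' g')
  have hfact : Polynomial.C g'.leadingCoeff
      * (g'.roots.map (fun a => Polynomial.X - Polynomial.C a)).prod = g' :=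
    Polynomial.C_leadingCoeff_mul_prod_multiset_X_sub_C (by rw [hcardroots, hg'deg])
  set L : List ℝ := g'.roots.toList with hL
  have hLnd : L.Nodup := by
    have h0 := hnodup
    rw [← Multiset.coe_toList g'.roots] at h0
    exact (Multiset.coe_nodup).mp h0
  have hLlen : L.length = k - 1 := by rw [hL, Multiset.length_toList, hcardroots]
  have hLlen' : L.length ≤ n - 1 := by omega
  -- the target polynomial h₀ and the chain rule
  set h₀ : MvPolynomial (Fin 2) ℝ := C α * pderiv 0 f + C β * pderiv 1 f with hh₀
  have hΦh : aeval v h₀ = g' := by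
    have d0 : Polynomial.derivative (v 0) = Polynomial.C α := by
      simp [hv]
    have d1 : Polynomial.derivative (v 1) = Polynomial.C β := by
      simp [hv]
    rw [hg', hg, deriv_aeval2 v f, d0, d1, hh₀]
    simp only [map_add, map_mul, aeval_C, Polynomial.algebraMap_eq]
    ring
  have hhomh : h₀.IsHomogeneous (n - 1) := by
    rw [hh₀]
    exact ((isHomogeneous_pderiv hhom 0).C_mul α).add ((isHomogeneous_pderiv hhom 1).C_mul β)
  -- linear forms for the factorization of h₀
  set u : Fin (n - 1) → ℝ × ℝ :=
    fun j => if hj : (j : ℕ) < L.length then (1, -(L.get ⟨j, hj⟩)) else (0, 1) with hu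
  set T : ℝ × ℝ → ℝ × ℝ := fun ab => (ab.1 * δ - ab.2 * β, ab.2 * α - ab.1 * γ) with hT
  set l' : Fin (n - 1) → ℝ × ℝ := fun j => T (u j) with hl'
  have hu0 : ∀ j, u j ≠ 0 := by
    intro j
    simp only [hu]
    split_ifs with hj
    · intro h0
      simpa using congrArg Prod.fst h0
    · intro h0
      simpa using congrArg Prod.snd h0
  have hT0 : ∀ ab : ℝ × ℝ, ab ≠ 0 → T ab ≠ 0 := by
    intro ab hab0 hzero
    apply hab0
    have h1 : ab.1 * δ - ab.2 * β = 0 := by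
      have := congrArg Prod.fst hzero
      simpa [hT] using this
    have h2 : ab.2 * α - ab.1 * γ = 0 := by
      have := congrArg Prod.snd hzero
      simpa [hT] using this
    have e1 : ab.1 = 0 := by linear_combination α * h1 + β * h2 + (-ab.1) * hdet
    have e2 : ab.2 = 0 := by linear_combination γ * h1 + δ * h2 + (-ab.2) * hdet
    exact Prod.ext e1 e2
  have hTdet : ∀ a b : ℝ × ℝ, (T a).1 * (T b).2 - (T b).1 * (T a).2
      = a.1 * b.2 - b.1 * a.2 := by
    intro a b
    rw [hT]
    simp only
    linear_combination (a.1 * b.2 - b.1 * a.2) * hdet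
  have hdetC : Polynomial.C α * Polynomial.C δ - Polynomial.C β * Polynomial.C γ = 1 := by
    rw [← Polynomial.C_mul, ← Polynomial.C_mul, ← Polynomial.C_sub, hdet, Polynomial.C_1]
  have hlinT : ∀ ab : ℝ × ℝ, aeval v (lin (T ab))
      = Polynomial.C ab.1 * Polynomial.X + Polynomial.C ab.2 := by
    intro ab
    simp only [lin, map_add, map_mul, aeval_X, aeval_C, Polynomial.algebraMap_eq, hv,
      Matrix.cons_val_zero, Matrix.cons_val_one, Matrix.head_cons, hT,
      Polynomial.C_sub, Polynomial.C_mul]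
    linear_combination (Polynomial.C ab.1 * Polynomial.X + Polynomial.C ab.2) * hdetC
  set lc := g'.leadingCoeff with hlc
  have hlc0 : lc ≠ 0 := Polynomial.leadingCoeff_ne_zero.mpr hg'ne
  set P : MvPolynomial (Fin 2) ℝ := C lc * ∏ j, lin (l' j) with hP
  have hprodid : (∏ j : Fin (n - 1),
        (Polynomial.C (u j).1 * Polynomial.X + Polynomial.C (u j).2))
      = (L.map (fun a => Polynomial.X - Polynomial.C a)).prod := by
    set F : ℕ → Polynomial ℝ := fun j =>
      if hj : j < L.length then Polynomial.X - Polynomial.C (L.get ⟨j, hj⟩) else 1 with hF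
    have step1 : ∀ j : Fin (n - 1),
        (Polynomial.C (u j).1 * Polynomial.X + Polynomial.C (u j).2) = F (j : ℕ) := by
      intro j
      simp only [hu, hF]
      split_ifs with hj
      · simp [sub_eq_add_neg]
      · simp
    rw [Finset.prod_congr rfl (fun j _ => step1 j)]
    rw [Fin.prod_univ_eq_prod_range F (n - 1)]
    rw [← Finset.prod_subset (Finset.range_subset_range.mpr hLlen') (fun x _ hx => by
      simp only [Finset.mem_range] at hx
      exact dif_neg hx)]
    rw [← Fin.prod_univ_eq_prod_range F L.length]
    conv_rhs => rw [← List.ofFn_get L]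
    rw [List.map_ofFn, List.prod_ofFn]
    apply Finset.prod_congr rfl
    intro i _
    simp only [hF, Function.comp]
    rw [dif_pos i.isLt]
  have hΦP : aeval v P = g' := by
    rw [hP, map_mul, map_prod]
    have hClc : aeval v (C lc : MvPolynomial (Fin 2) ℝ) = Polynomial.C lc := by
      simp [Polynomial.algebraMap_eq]
    have hfac : ∀ j : Fin (n - 1), aeval v (lin (l' j))
        = Polynomial.C (u j).1 * Polynomial.X + Polynomial.C (u j).2 := by
      intro j
      simp only [hl']
      exact hlinT (u j)
    rw [hClc, Finset.prod_congr rfl (fun j _ => hfac j), hprodid]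
    have hml : (g'.roots.map (fun a => Polynomial.X - Polynomial.C a)).prod
        = (L.map (fun a => Polynomial.X - Polynomial.C a)).prod := by
      conv_lhs => rw [← Multiset.coe_toList g'.roots]
      rw [Multiset.map_coe, Multiset.prod_coe]
    rw [← hml]
    exact hfact
  have hlinhom : ∀ ab : ℝ × ℝ, (lin ab).IsHomogeneous 1 := by
    intro ab
    exact (isHomogeneous_C_mul_X ab.1 0).add (isHomogeneous_C_mul_X ab.2 1)
  have hPhom : P.IsHomogeneous (n - 1) := by
    rw [hP]
    have hpr := MvPolynomial.IsHomogeneous.prod Finset.univ (fun j => lin (l' j))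
      (fun _ => 1) (fun j _ => hlinhom (l' j))
    simpa using hpr.C_mul lc
  set w₀ : MvPolynomial (Fin 2) ℝ := h₀ - P with hw₀
  have hw₀hom : w₀.IsHomogeneous (n - 1) := hhomh.sub hPhom
  have hΦw₀ : aeval v w₀ = 0 := by rw [hw₀, map_sub, hΦh, hΦP, sub_self]
  have hzero : ∀ z : ℝ, eval ![α * z + γ, β * z + δ] w₀ = 0 := by
    intro z
    have hvx : (fun i => (v i).eval z) = ![α * z + γ, β * z + δ] := by
      funext i
      fin_cases i <;> simp [hv]
    rw [← hvx, ← eval_aeval_poly z v w₀, hΦw₀, Polynomial.eval_zero]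
  have hval : ∀ x : Fin 2 → ℝ, eval x w₀ = 0 := by
    intro x
    set t := δ * x 0 - γ * x 1 with ht
    set s := -β * x 0 + α * x 1 with hs
    by_cases hs0 : s = 0
    · have hs0' : -β * x 0 + α * x 1 = 0 := by rw [← hs]; exact hs0
      have hx : x = fun i => t * (![α, β] i) := by
        funext i
        fin_cases i
        · show x 0 = t * α
          rw [ht]
          linear_combination (-(x 0)) * hdet + γ * hs0'
        · show x 1 = t * β
          rw [ht]
          linear_combination (-(x 1)) * hdet + δ * hs0'
      rw [hx, eval_mul_of_homog hw₀hom]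
      suffices hfin : eval ![α, β] w₀ = 0 by rw [hfin]; ring
      set v' : Fin 2 → Polynomial ℝ :=
        ![Polynomial.C α + Polynomial.C γ * Polynomial.X,
          Polynomial.C β + Polynomial.C δ * Polynomial.X] with hv'
      have hroots' : ∀ z : ℝ, z ≠ 0 → (aeval v' w₀).IsRoot z := by
        intro z hz
        show (aeval v' w₀).eval z = 0
        rw [eval_aeval_poly z v' w₀]
        have hxz : (fun i => (v' i).eval z)
            = fun i => z * (![α * (1 / z) + γ, β * (1 / z) + δ] i) := by
          funext i
          fin_cases i <;>
            (simp [hv']; field_simp; try ring)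
        rw [hxz, eval_mul_of_homog hw₀hom, hzero (1 / z), mul_zero]
      have hq0 : aeval v' w₀ = 0 := by
        apply Polynomial.eq_zero_of_infinite_isRoot
        apply Set.Infinite.mono (fun z hz => hroots' z hz)
        exact Set.Finite.infinite_compl (Set.finite_singleton (0 : ℝ))
      have hfun0 : (fun i => (v' i).eval 0) = ![α, β] := by
        funext i
        fin_cases i <;> simp [hv']
      have hev0 : eval ![α, β] w₀ = (aeval v' w₀).eval 0 := by
        rw [eval_aeval_poly 0 v' w₀, hfun0]
      rw [hev0, hq0, Polynomial.eval_zero]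
    · have hx : x = fun i => s * (![α * (t / s) + γ, β * (t / s) + δ] i) := by
        funext i
        fin_cases i
        · show x 0 = s * (α * (t / s) + γ)
          have hexp : s * (α * (t / s) + γ) = α * t + γ * s := by
            field_simp
          rw [hexp, ht, hs]
          linear_combination (-(x 0)) * hdet
        · show x 1 = s * (β * (t / s) + δ)
          have hexp : s * (β * (t / s) + δ) = β * t + δ * s := by
            field_simp
          rw [hexp, ht, hs]
          linear_combination (-(x 1)) * hdet
      rw [hx, eval_mul_of_homog hw₀hom, hzero (t / s), mul_zero]
  have hw0 : w₀ = 0 := hw₀hom.eq_zero_of_forall_eval_eq_zero hval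
  have heq : h₀ = P := by rwa [hw₀, sub_eq_zero] at hw0
  refine ⟨lc, l', hlc0, ?_, ?_, by rw [heq, hP]⟩
  · intro j
    simp only [hl']
    exact hT0 (u j) (hu0 j)
  · intro i j hij
    simp only [hl']
    rw [hTdet]
    simp only [hu]
    split_ifs with hi hj hj
    · dsimp only
      intro h0
      have hab : L.get ⟨(i : ℕ), hi⟩ = L.get ⟨(j : ℕ), hj⟩ := by linarith
      have h2 := (List.nodup_iff_injective_get.mp hLnd) hab
      apply hij
      exact Fin.ext (by simpa using congrArg Fin.val h2)
    · dsimp only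
      norm_num
    · dsimp only
      norm_num
    · exfalso
      apply hij
      have hi' : L.length ≤ (i : ℕ) := le_of_not_gt hi
      have hj' : L.length ≤ (j : ℕ) := le_of_not_gt hj
      have hilt := i.isLt
      have hjlt := j.isLt
      exact Fin.ext (by omega)
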